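/- For all natural n ≥ 1, c - ỹ_{n+1} ∈ [1 - 3c/2, c/2]. -/

import Mathlib

noncomputable def c : ℝ := 4 / (9 - Real.sqrt 5)
noncomputable def φ : ℝ := (1 + Real.sqrt 5) / 2

set_option maxHeartbeats 1000000 in
theorem stmt10 (y : ℕ → ℝ) (h1 : y 1 = c) (h2 : y 2 = c / 2)
    (hrec : ∀ n : ℕ, 1 ≤ n →
      2 * y (n + 1) = 2 * y n + c * (-1 : ℝ) ^ n * φ ^ ((1 : ℤ) - (n : ℤ)))
    (n : ℕ) (hn : 1 ≤ n) :
    c - y (n + 1) ∈ Set.Icc (1 - 3 * c / 2) (c / 2) := by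
  have hs : Real.sqrt 5 ^ 2 = 5 := Real.sq_sqrt (by norm_num)
  have hs0 : (0:ℝ) ≤ Real.sqrt 5 := Real.sqrt_nonneg 5
  have hs2 : (2:ℝ) < Real.sqrt 5 := by nlinarith
  have hs3 : Real.sqrt 5 < 3 := by nlinarith
  have hφ1 : (1:ℝ) < φ := by unfold φ; linarith
  have hφ0 : (0:ℝ) < φ := by linarith
  have hφne : φ ≠ 0 := ne_of_gt hφ0
  have hφsq : φ^2 = φ + 1 := by unfold φ; field_simp; nlinarith
  have hc0 : (0:ℝ) < c := by unfold c; apply div_pos <;> norm_num; linarith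
  have hc : c = (9 + Real.sqrt 5)/19 := by
    unfold c
    rw [div_eq_div_iff (by linarith) (by norm_num)]
    nlinarith
  have hco : c/(2*φ) - c/2 = c/(2*φ) * (-φ⁻¹) := by
    field_simp
    linear_combination (-1) * hφsq
  have heq1 : c/(2*φ) * (1 + φ⁻¹) = c/2 := by
    field_simp
    linear_combination (-1) * hφsq
  have heq2a : c/(2*φ) * (1 - φ⁻¹^2) = c/(2*φ^2) := by
    field_simp
    linear_combination (1) * hφsq
  have hφ2 : φ^2 = (3 + Real.sqrt 5)/2 := by
    unfold φ; field_simp; nlinarith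
  have heq2 : c/(2*φ) * (1 - φ⁻¹^2) = 1 - 3*c/2 := by
    rw [heq2a, hφ2, hc]
    field_simp
    nlinarith
  -- closed form
  have key : ∀ m : ℕ, 1 ≤ m → y (m+1) = c - c/(2*φ) + (c/(2*φ)) * (-φ⁻¹)^m := by
    intro m hm
    induction m with
    | zero => omega
    | succ k ih =>
      rcases Nat.eq_or_lt_of_le hm with h0 | h0
      · -- k = 0, m = 1
        have hk : k = 0 := by omega
        subst hk
        rw [h2, pow_one]
        linear_combination heq1
      · have hk : 1 ≤ k := by omega
        have ihk := ih hk
        have hr := hrec (k+1) (by omega)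
        have hz : φ ^ ((1 : ℤ) - ((k+1 : ℕ) : ℤ)) = (φ⁻¹)^k := by
          push_cast
          rw [show (1 : ℤ) - ((k:ℤ)+1) = -(k:ℤ) by ring, zpow_neg, zpow_natCast,
            inv_pow]
        rw [hz, ihk] at hr
        have ht : ((-1 : ℝ)) ^ (k+1) * (φ⁻¹)^k = -(-φ⁻¹)^k := by
          rw [neg_pow φ⁻¹ k, pow_succ]
          ring
        have h2y : 2 * y (k+1+1) = 2*(c - c/(2*φ) + (c/(2*φ)) * (-φ⁻¹)^k)
            + c * (-(-φ⁻¹)^k) := by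
          rw [hr]; rw [← ht]; ring
        have hgoal : 2*(c - c/(2*φ) + (c/(2*φ)) * (-φ⁻¹)^k) + c * (-(-φ⁻¹)^k)
            = 2 * (c - c/(2*φ) + (c/(2*φ)) * (-φ⁻¹)^(k+1)) := by
          rw [pow_succ]
          linear_combination (2*(-φ⁻¹)^k) * hco
        linarith [h2y, hgoal]
  have hform := key n hn
  set t : ℝ := (-φ⁻¹)^n with htdef
  have hφi : φ⁻¹ < 1 := by
    rw [inv_lt_one_iff₀]; right; exact hφ1
  have hφi0 : 0 < φ⁻¹ := by positivity
  have htlow : -φ⁻¹ ≤ t := by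
    have h1' : |t| ≤ φ⁻¹ := by
      rw [htdef, abs_pow, abs_neg, abs_of_pos hφi0]
      calc φ⁻¹ ^ n ≤ φ⁻¹ ^ 1 := pow_le_pow_of_le_one (le_of_lt hφi0) (le_of_lt hφi) hn
        _ = φ⁻¹ := pow_one _
    linarith [abs_le.mp h1' |>.1]
  have hthigh : t ≤ φ⁻¹^2 := by
    rcases Nat.even_or_odd n with he | ho
    · obtain ⟨j, hj⟩ := he
      have hj1 : 1 ≤ j := by omega
      have htj : t = (φ⁻¹^2)^j := by
        rw [htdef, hj, ← two_mul, pow_mul, neg_sq]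
      rw [htj]
      calc (φ⁻¹^2)^j ≤ (φ⁻¹^2)^1 := by
            apply pow_le_pow_of_le_one (by positivity) (by nlinarith) hj1
        _ = φ⁻¹^2 := pow_one _
    · have hneg : t ≤ 0 := by
        rw [htdef, neg_pow, ho.neg_one_pow]
        nlinarith [pow_pos hφi0 n]
      nlinarith [sq_nonneg φ⁻¹]
  have hcφ : 0 < c/(2*φ) := by positivity
  have hval : c - y (n+1) = c/(2*φ) * (1 - t) := by
    rw [hform]; ring
  constructor
  · rw [hval, ← heq2]
    nlinarith
  · rw [hval, ← heq1]
    nlinarith
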